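/- arXiv:2507.15488 — 3 statements merged into one kernel-verified Lean document; each statement's English description precedes it below -/
import Mathlib

section
/- Let d, n ∈ ℕ and let f ∈ ℂ[X] with deg f ≤ d and f(0) = 1. Let p_n be the degree-n OPA to 1/f, set u_m := (coeff of X^m in p_n · f · f*_d) for every m, and let φ_n := (p_n)*_n be the conjugate-reversal of p_n of order n. Then for every z ∈ ℂ with |z| > 1: ∮_{|t|=1} [φ_n(t) · f(t) · f*_d(t) · t^{−(n+d)}] / (t − z) dt = −2πi · ∑_{j=1}^{d} conj(u_{n+d+j}) · z^{−n−j}, where the contour integral is over the positively oriented unit circle. -/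
open Polynomial Complex

/-- The squared H² norm of a polynomial: `‖g‖² = ∑ₖ |gₖ|²`. -/
noncomputable def hnormSq (g : Polynomial ℂ) : ℝ :=
  ∑ᶠ k : ℕ, ‖g.coeff k‖ ^ 2

/-- `p` is the degree-`n` optimal polynomial approximant (OPA) to `1/f` in H². -/
def IsOPA (f : Polynomial ℂ) (n : ℕ) (p : Polynomial ℂ) : Prop :=
  p.degree ≤ (n : ℕ) ∧
    ∀ q : Polynomial ℂ, q.degree ≤ (n : ℕ) → hnormSq (1 - p * f) ≤ hnormSq (1 - q * f)

/-- Conjugate-reversal of order `N`: `q*_N(X) = ∑_{j=0}^N conj(q_{N-j}) Xʲ`. -/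
noncomputable def cRev (N : ℕ) (q : Polynomial ℂ) : Polynomial ℂ :=
  ∑ j ∈ Finset.range (N + 1), Polynomial.C ((starRingEnd ℂ) (q.coeff (N - j))) * Polynomial.X ^ j

-- cRev basics
lemma cRev_coeff (N : ℕ) (q : Polynomial ℂ) {j : ℕ} (hj : j ≤ N) :
    (cRev N q).coeff j = (starRingEnd ℂ) (q.coeff (N - j)) := by
  rw [cRev, Polynomial.finset_sum_coeff]
  simp only [Polynomial.coeff_C_mul, Polynomial.coeff_X_pow]
  rw [Finset.sum_eq_single j]
  · simp
  · intro b _ hb; simp [Ne.symm hb]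
  · intro h; exact absurd (Finset.mem_range.2 (Nat.lt_succ_of_le hj)) h

lemma cRev_coeff_gt (N : ℕ) (q : Polynomial ℂ) {j : ℕ} (hj : N < j) :
    (cRev N q).coeff j = 0 := by
  rw [cRev, Polynomial.finset_sum_coeff]
  apply Finset.sum_eq_zero
  intro b hb
  have : j ≠ b := by have := Finset.mem_range.1 hb; omega
  simp [Polynomial.coeff_C_mul, Polynomial.coeff_X_pow, this]

lemma natDegree_cRev_le (N : ℕ) (q : Polynomial ℂ) : (cRev N q).natDegree ≤ N :=
  Polynomial.natDegree_le_iff_coeff_eq_zero.2 fun _ h => cRev_coeff_gt N q h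

lemma cRev_eq_reflect {N : ℕ} {q : Polynomial ℂ} (h : q.natDegree ≤ N) :
    cRev N q = Polynomial.reflect N (q.map (starRingEnd ℂ)) := by
  ext j
  by_cases hj : j ≤ N
  · rw [cRev_coeff N q hj, Polynomial.coeff_reflect, Polynomial.revAt_le hj,
      Polynomial.coeff_map]
  · push_neg at hj
    rw [cRev_coeff_gt N q hj, Polynomial.coeff_reflect]
    have : Polynomial.revAt N j = j := by
      show Polynomial.revAtFun N j = j
      unfold Polynomial.revAtFun; rw [if_neg (by omega)]
    rw [this, Polynomial.coeff_map]
    rw [Polynomial.coeff_eq_zero_of_natDegree_lt (lt_of_le_of_lt h hj)]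
    simp

lemma map_conj_conj (q : Polynomial ℂ) :
    (q.map (starRingEnd ℂ)).map (starRingEnd ℂ) = q := by
  ext j; simp [Polynomial.coeff_map]

lemma reflect_reflect (N : ℕ) (q : Polynomial ℂ) :
    Polynomial.reflect N (Polynomial.reflect N q) = q := by
  ext j; simp [Polynomial.coeff_reflect, Polynomial.revAt_invol]

lemma map_conj_cRev {N : ℕ} {q : Polynomial ℂ} (h : q.natDegree ≤ N) :
    (cRev N q).map (starRingEnd ℂ) = Polynomial.reflect N q := by
  rw [cRev_eq_reflect h, ← Polynomial.reflect_map, map_conj_conj]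

-- the key reversal identity: cRev (n+2d) (p*f*cRev d f) = cRev n p * f * cRev d f
lemma cRev_pff {n d : ℕ} {p f : Polynomial ℂ} (hpn : p.natDegree ≤ n) (hfd : f.natDegree ≤ d) :
    cRev (n + 2 * d) (p * f * cRev d f) = cRev n p * f * cRev d f := by
  have h1 : (p * f * cRev d f).natDegree ≤ n + 2 * d := by
    calc (p * f * cRev d f).natDegree ≤ (p * f).natDegree + (cRev d f).natDegree :=
          Polynomial.natDegree_mul_le
      _ ≤ (p.natDegree + f.natDegree) + d :=
          add_le_add Polynomial.natDegree_mul_le (natDegree_cRev_le d f)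
      _ ≤ n + 2 * d := by omega
  rw [cRev_eq_reflect h1]
  have hmap : (p * f * cRev d f).map (starRingEnd ℂ)
      = (p.map (starRingEnd ℂ) * f.map (starRingEnd ℂ)) * Polynomial.reflect d f := by
    rw [Polynomial.map_mul, Polynomial.map_mul, map_conj_cRev hfd]
  rw [hmap]
  have h2 : (p.map (starRingEnd ℂ) * f.map (starRingEnd ℂ)).natDegree ≤ n + d := by
    calc _ ≤ (p.map (starRingEnd ℂ)).natDegree + (f.map (starRingEnd ℂ)).natDegree :=
          Polynomial.natDegree_mul_le
      _ ≤ n + d := add_le_add (le_trans (Polynomial.natDegree_map_le) hpn)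
          (le_trans (Polynomial.natDegree_map_le) hfd)
  have h3 : (Polynomial.reflect d f).natDegree ≤ d := by
    apply Polynomial.natDegree_le_iff_coeff_eq_zero.2
    intro m hm
    rw [Polynomial.coeff_reflect]
    have : Polynomial.revAt d m = m := by
      show Polynomial.revAtFun d m = m
      unfold Polynomial.revAtFun; rw [if_neg (by omega)]
    rw [this]
    exact Polynomial.coeff_eq_zero_of_natDegree_lt (lt_of_le_of_lt hfd hm)
  have hsplit : n + 2 * d = (n + d) + d := by omega
  rw [hsplit, Polynomial.reflect_mul _ _ h2 h3,
    Polynomial.reflect_mul _ _ (le_trans (Polynomial.natDegree_map_le) hpn)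
      (le_trans (Polynomial.natDegree_map_le) hfd),
    _root_.reflect_reflect, ← cRev_eq_reflect hpn, ← cRev_eq_reflect hfd]
  ring

lemma hnormSq_eq_sum {g : Polynomial ℂ} {M : ℕ} (h : g.natDegree < M) :
    hnormSq g = ∑ k ∈ Finset.range M, ‖g.coeff k‖ ^ 2 := by
  apply finsum_eq_sum_of_support_subset
  intro k hk
  simp only [Function.mem_support] at hk
  simp only [Finset.coe_range, Set.mem_Iio]
  by_contra hkM
  push_neg at hkM
  exact hk (by rw [Polynomial.coeff_eq_zero_of_natDegree_lt (lt_of_lt_of_le h hkM)]; simp)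

-- Orthogonality from optimality
lemma opa_orth {d n : ℕ} {f p : Polynomial ℂ} (hfd : f.natDegree ≤ d)
    (hp : IsOPA f n p) (q : Polynomial ℂ) (hq : q.degree ≤ (n : ℕ)) :
    ∑ i ∈ Finset.range (n + d + 1),
      (1 - p * f).coeff i * (starRingEnd ℂ) ((q * f).coeff i) = 0 := by
  set M := n + d + 1 with hM
  set A := 1 - p * f with hA
  set B := q * f with hB
  have hpn : p.natDegree ≤ n := Polynomial.natDegree_le_iff_degree_le.2 hp.1
  have hqn : q.natDegree ≤ n := Polynomial.natDegree_le_iff_degree_le.2 hq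
  have hAdeg : A.natDegree < M := by
    have h0 : (p * f).natDegree ≤ n + d :=
      le_trans Polynomial.natDegree_mul_le (add_le_add hpn hfd)
    have h1 := Polynomial.natDegree_sub_le (1 : Polynomial ℂ) (p*f)
    simp only [Polynomial.natDegree_one] at h1
    rw [← hA] at h1
    omega
  have hBdeg : B.natDegree ≤ n + d :=
    le_trans Polynomial.natDegree_mul_le (add_le_add hqn hfd)
  set T := ∑ i ∈ Finset.range M, A.coeff i * (starRingEnd ℂ) (B.coeff i) with hT
  set nB := ∑ i ∈ Finset.range M, Complex.normSq (B.coeff i) with hnB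
  have hnB0 : 0 ≤ nB := Finset.sum_nonneg fun i _ => Complex.normSq_nonneg _
  -- key inequality for any c
  have key : ∀ c : ℂ, 0 ≤ Complex.normSq c * nB - 2 * ((starRingEnd ℂ) c * T).re := by
    intro c
    have hdeg : (p + Polynomial.C c * q).degree ≤ (n : ℕ) := by
      refine le_trans (Polynomial.degree_add_le _ _) (max_le hp.1 ?_)
      exact le_trans (Polynomial.degree_mul_le _ _)
        (by simpa using le_trans (add_le_add (Polynomial.degree_C_le) hq) (by simp))
    have hineq := hp.2 _ hdeg
    have hpoly : 1 - (p + Polynomial.C c * q) * f = A - Polynomial.C c * B := by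
      rw [hA, hB]; ring
    rw [hpoly] at hineq
    have hdeg2 : (A - Polynomial.C c * B).natDegree < M := by
      have h2 : (Polynomial.C c * B).natDegree ≤ n + d := by
        refine le_trans Polynomial.natDegree_mul_le ?_
        have := Polynomial.natDegree_C (a := c)
        omega
      have := Polynomial.natDegree_sub_le A (Polynomial.C c * B)
      omega
    rw [hnormSq_eq_sum hAdeg, hnormSq_eq_sum hdeg2] at hineq
    have expand : ∀ i, ‖(A - Polynomial.C c * B).coeff i‖ ^ 2
        = ‖A.coeff i‖ ^ 2
          + (Complex.normSq c * Complex.normSq (B.coeff i)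
            - 2 * ((starRingEnd ℂ) c * (A.coeff i * (starRingEnd ℂ) (B.coeff i))).re) := by
      intro i
      rw [Complex.sq_norm, Complex.sq_norm]
      have hco : (A - Polynomial.C c * B).coeff i = A.coeff i + (-(c * B.coeff i)) := by
        simp [Polynomial.coeff_sub, Polynomial.coeff_C_mul]; ring
      rw [hco, Complex.normSq_add]
      have h1 : Complex.normSq (-(c * B.coeff i))
          = Complex.normSq c * Complex.normSq (B.coeff i) := by
        simp [Complex.normSq_mul]
      rw [h1]
      have h2 : (A.coeff i * (starRingEnd ℂ) (-(c * B.coeff i))).re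
          = -(((starRingEnd ℂ) c) * (A.coeff i * (starRingEnd ℂ) (B.coeff i))).re := by
        rw [map_neg, map_mul, mul_neg, Complex.neg_re]
        congr 1
        ring
      rw [h2]; ring
    simp only [expand, Finset.sum_add_distrib] at hineq
    have h3 : 0 ≤ ∑ i ∈ Finset.range M, (Complex.normSq c * Complex.normSq (B.coeff i)
        - 2 * ((starRingEnd ℂ) c * (A.coeff i * (starRingEnd ℂ) (B.coeff i))).re) := by
      linarith [hineq]
    calc (0:ℝ) ≤ _ := h3
      _ = Complex.normSq c * nB - 2 * ((starRingEnd ℂ) c * T).re := by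
        rw [Finset.sum_sub_distrib, ← Finset.mul_sum, ← Finset.mul_sum, ← Complex.re_sum,
          ← Finset.mul_sum]
  -- choose the variational direction
  set ε : ℝ := (nB + 1)⁻¹ with hε
  have hεpos : 0 < ε := by positivity
  have hεnB : ε * nB < 2 := by
    rw [hε]
    have h1 : (nB + 1)⁻¹ * nB < 1 := by
      rw [inv_mul_lt_iff₀ (by positivity)]
      linarith
    linarith
  have hkey := key ((ε : ℂ) * T)
  have hre : (((starRingEnd ℂ) ((ε:ℂ) * T)) * T).re = ε * Complex.normSq T := by
    rw [map_mul]
    have : (starRingEnd ℂ) (ε:ℂ) = (ε:ℂ) := Complex.conj_ofReal ε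
    rw [this, mul_assoc]
    have : (starRingEnd ℂ) T * T = (Complex.normSq T : ℂ) := by
      rw [mul_comm, Complex.mul_conj]
    rw [this, ← Complex.ofReal_mul, Complex.ofReal_re]
  have hns : Complex.normSq ((ε:ℂ) * T) = ε^2 * Complex.normSq T := by
    rw [Complex.normSq_mul, Complex.normSq_ofReal]; ring
  rw [hre, hns] at hkey
  have hX : 0 ≤ (ε * Complex.normSq T) * (ε * nB - 2) := by nlinarith [hkey]
  have hle : ε * Complex.normSq T ≤ 0 := by
    by_contra hpos0
    push_neg at hpos0
    have hprod := mul_pos hpos0 (show (0:ℝ) < 2 - ε * nB by linarith)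
    nlinarith [hX]
  have hT0 : Complex.normSq T ≤ 0 := by
    by_contra hpos1
    push_neg at hpos1
    have := mul_pos hεpos hpos1
    linarith
  exact Complex.normSq_eq_zero.1 (le_antisymm hT0 (Complex.normSq_nonneg T))

lemma sum_eq_coeff_mul_cRev (A B : Polynomial ℂ) (M : ℕ) :
    (A * cRev M B).coeff M
      = ∑ i ∈ Finset.range (M + 1), A.coeff i * (starRingEnd ℂ) (B.coeff i) := by
  rw [Polynomial.coeff_mul, Finset.Nat.sum_antidiagonal_eq_sum_range_succ_mk]
  apply Finset.sum_congr rfl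
  intro i hi
  have hi' : i ≤ M := Nat.lt_succ_iff.1 (Finset.mem_range.1 hi)
  rw [cRev_coeff M B (Nat.sub_le M i), Nat.sub_sub_self hi']

lemma opa_coeff_zero {d n : ℕ} {f p : Polynomial ℂ} (hfd : f.natDegree ≤ d)
    (hp : IsOPA f n p) {k : ℕ} (hk1 : 1 ≤ k) (hkn : k ≤ n) :
    (p * f * cRev d f).coeff (d + k) = 0 := by
  have hdegXk : (Polynomial.X ^ k : Polynomial ℂ).degree ≤ (n : ℕ) := by
    rw [Polynomial.degree_X_pow]
    exact_mod_cast hkn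
  have horth := opa_orth hfd hp (Polynomial.X ^ k) hdegXk
  have h0 : ((1 - p * f) * cRev (n + d) (Polynomial.X ^ k * f)).coeff (n + d) = 0 := by
    rw [sum_eq_coeff_mul_cRev]; exact horth
  have hrev : cRev (n + d) (Polynomial.X ^ k * f)
      = cRev d f * Polynomial.X ^ (n - k) := by
    have hndeg : (Polynomial.X ^ k * f).natDegree ≤ n + d := by
      refine le_trans Polynomial.natDegree_mul_le ?_
      have := Polynomial.natDegree_X_pow (R := ℂ) k
      omega
    rw [cRev_eq_reflect hndeg, Polynomial.map_mul, Polynomial.map_pow, Polynomial.map_X]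
    rw [show n + d = k + (d + (n - k)) by omega]
    rw [Polynomial.reflect_mul _ _ (le_of_eq (Polynomial.natDegree_X_pow k))
        (le_trans Polynomial.natDegree_map_le (by omega))]
    rw [Polynomial.reflect_monomial]
    rw [Polynomial.revAt_le (le_refl k), Nat.sub_self, pow_zero, one_mul]
    have hf1 : f.map (starRingEnd ℂ) = f.map (starRingEnd ℂ) * Polynomial.X ^ 0 := by
      rw [pow_zero, mul_one]
    rw [hf1, Polynomial.reflect_mul _ _ (le_trans Polynomial.natDegree_map_le hfd)
        (by simp), Polynomial.reflect_monomial, Polynomial.revAt_le (Nat.zero_le _),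
      Nat.sub_zero, ← cRev_eq_reflect hfd]
  rw [hrev, ← mul_assoc, Polynomial.coeff_mul_X_pow', if_pos (by omega)] at h0
  have hidx : n + d - (n - k) = d + k := by omega
  rw [hidx, sub_mul, one_mul, Polynomial.coeff_sub,
    cRev_coeff_gt d f (by omega : d < d + k), zero_sub, neg_eq_zero] at h0
  exact h0

-- Integral machinery
lemma sphere_facts {t z : ℂ} (hz : 1 < ‖z‖) (ht : t ∈ Metric.sphere (0:ℂ) 1) :
    t ≠ 0 ∧ t - z ≠ 0 := by
  have h1 : ‖t‖ = 1 := by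
    simpa [Complex.dist_eq] using (Metric.mem_sphere.1 ht)
  constructor
  · intro h; rw [h] at h1; simp at h1
  · intro h
    have : t = z := sub_eq_zero.1 h
    rw [this] at h1; rw [h1] at hz; norm_num at hz

lemma circleInt_aux (z : ℂ) (hz : 1 < ‖z‖) (k : ℤ) :
    CircleIntegrable (fun t => t ^ k / (t - z)) 0 1 := by
  apply ContinuousOn.circleIntegrable (by norm_num)
  intro t ht
  obtain ⟨ht0, htz⟩ := sphere_facts hz ht
  exact ((continuousAt_zpow₀ t k (Or.inl ht0)).div
    ((continuousAt_id.sub continuousAt_const)) htz).continuousWithinAt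

lemma circleInt_pow_zero (z : ℂ) (hz : 1 < ‖z‖) (k : ℕ) :
    (∮ t in C(0, 1), t ^ (k : ℤ) / (t - z)) = 0 := by
  have hfun : (fun t : ℂ => t ^ (k:ℤ) / (t - z)) = fun t => t ^ k / (t - z) := by
    funext t; rw [zpow_natCast]
  rw [hfun]
  have hd : ∀ t ∈ Metric.closedBall (0:ℂ) 1, DifferentiableAt ℂ (fun t => t ^ k / (t - z)) t := by
    intro t ht
    have htz : t - z ≠ 0 := by
      intro h
      have : t = z := sub_eq_zero.1 h
      have h1 : ‖t‖ ≤ 1 := by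
        simpa [Complex.dist_eq] using (Metric.mem_closedBall.1 ht)
      rw [this] at h1; linarith
    exact (differentiableAt_pow k).div ((differentiableAt_id).sub (differentiableAt_const z)) htz
  exact Complex.circleIntegral_eq_zero_of_differentiable_on_off_countable zero_le_one
    Set.countable_empty (fun t ht => (hd t ht).continuousAt.continuousWithinAt)
    (fun t ht => hd t (Metric.ball_subset_closedBall ht.1))

lemma circleInt_zpow_alone (z : ℂ) (m : ℕ) :
    (∮ t in C(0, 1), t ^ (-((m:ℤ)+1))) = if m = 0 then 2 * Real.pi * Complex.I else 0 := by
  have hfun : Set.EqOn (fun t : ℂ => t ^ (-((m:ℤ)+1))) (fun t => (t - 0) ^ (-((m:ℤ)+1)))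
      (Metric.sphere (0:ℂ) 1) := fun t _ => by norm_num
  rw [circleIntegral.integral_congr zero_le_one hfun]
  rcases Nat.eq_zero_or_pos m with hm | hm
  · subst hm
    rw [if_pos rfl]
    have h1 := circleIntegral.integral_sub_inv_of_mem_ball
      (c := (0:ℂ)) (w := 0) (R := 1) (by simp)
    rw [← h1]
    apply circleIntegral.integral_congr zero_le_one
    intro t _
    norm_num
  · rw [if_neg (by omega)]
    exact circleIntegral.integral_sub_zpow_of_ne
      (n := -((m:ℤ)+1)) (by omega) 0 0 1

lemma circleIntegral_finset_sum {ι : Type*} (s : Finset ι) (F : ι → ℂ → ℂ) (c : ℂ) (R : ℝ)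
    (h : ∀ i ∈ s, CircleIntegrable (F i) c R) :
    (∮ t in C(c, R), ∑ i ∈ s, F i t) = ∑ i ∈ s, ∮ t in C(c, R), F i t := by
  simp only [circleIntegral, Finset.smul_sum]
  exact intervalIntegral.integral_finset_sum (fun i hi => (h i hi).out)

lemma circleInt_neg (z : ℂ) (hz : 1 < ‖z‖) (m : ℕ) :
    (∮ t in C(0, 1), t ^ (-(m:ℤ)) / (t - z))
      = if m = 0 then 0 else -(2 * Real.pi * Complex.I) * z ^ (-(m:ℤ)) := by
  induction m with
  | zero =>
    rw [if_pos rfl]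
    simpa using circleInt_pow_zero z hz 0
  | succ m ih =>
    have hz0 : z ≠ 0 := by
      intro h; rw [h] at hz; norm_num at hz
    have hcong : Set.EqOn (fun t : ℂ => t ^ (-((m+1:ℕ):ℤ)) / (t - z))
        (fun t => z⁻¹ * (t ^ (-(m:ℤ)) / (t - z) - t ^ (-((m:ℤ)+1))))
        (Metric.sphere (0:ℂ) 1) := by
      intro t ht
      obtain ⟨ht0, htz⟩ := sphere_facts hz ht
      simp only
      have hsplit : (t : ℂ) ^ (-(m:ℤ)) = t ^ (-((m:ℤ)+1)) * t := by
        rw [← zpow_add_one₀ ht0]; congr 1; ring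
      rw [hsplit]
      have hcast : (-((m+1:ℕ):ℤ)) = -((m:ℤ)+1) := by push_cast; ring
      rw [hcast]
      field_simp
      ring
    rw [circleIntegral.integral_congr zero_le_one hcong,
      circleIntegral.integral_const_mul]
    have hint1 : CircleIntegrable (fun t : ℂ => t ^ (-(m:ℤ)) / (t - z)) 0 1 :=
      circleInt_aux z hz _
    have hint2 : CircleIntegrable (fun t : ℂ => t ^ (-((m:ℤ)+1))) 0 1 := by
      have h0 : ((0:ℂ)) ∉ Metric.sphere (0:ℂ) |(1:ℝ)| := by norm_num
      have h2 := (circleIntegrable_sub_zpow_iff (c := (0:ℂ)) (w := 0) (R := 1)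
        (n := -((m:ℤ)+1))).2 (Or.inr (Or.inr h0))
      simpa using h2
    rw [circleIntegral.integral_sub hint1 hint2, ih, circleInt_zpow_alone z m,
      if_neg (Nat.succ_ne_zero m)]
    have hzz : z ^ (-((m+1:ℕ):ℤ)) = z ^ (-(m:ℤ)) * z⁻¹ := by
      rw [← zpow_sub_one₀ hz0]
      congr 1
      push_cast
      ring
    rcases Nat.eq_zero_or_pos m with hm | hm
    · subst hm
      rw [if_pos rfl, if_pos rfl, hzz]
      simp only [Nat.cast_zero, neg_zero, zpow_zero]
      ring
    · rw [if_neg (by omega), if_neg (by omega), hzz]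
      ring

lemma circleInt_zpow_div (z : ℂ) (hz : 1 < ‖z‖) (k : ℤ) :
    (∮ t in C(0, 1), t ^ k / (t - z))
      = if k < 0 then -(2 * Real.pi * Complex.I) * z ^ k else 0 := by
  rcases lt_or_ge k 0 with hk | hk
  · rw [if_pos hk]
    have hk' : k = -(k.natAbs : ℤ) := by omega
    rw [hk', circleInt_neg z hz, if_neg (by omega)]
  · rw [if_neg (not_lt.2 hk)]
    have hk' : k = ((k.toNat : ℕ) : ℤ) := by omega
    rw [hk']
    exact circleInt_pow_zero z hz _

theorem second_kind_function_formula
    (d n : ℕ) (f : Polynomial ℂ) (hdf : f.degree ≤ (d : ℕ)) (hf0 : f.eval 0 = 1)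
    (p : Polynomial ℂ) (hp : IsOPA f n p)
    (u : ℕ → ℂ) (hu : ∀ m : ℕ, u m = (p * f * cRev d f).coeff m)
    (φ : Polynomial ℂ) (hφ : φ = cRev n p) :
    ∀ z : ℂ, 1 < ‖z‖ →
      (∮ t in C(0, 1),
        (φ.eval t * f.eval t * (cRev d f).eval t * t ^ (-((n : ℤ) + (d : ℤ)))) / (t - z)) =
      -(2 * (Real.pi : ℂ) * Complex.I) *
        ∑ j ∈ Finset.Icc 1 d, (starRingEnd ℂ) (u (n + d + j)) * z ^ (-(n : ℤ) - (j : ℤ)) := by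
  intro z hz
  have hpn : p.natDegree ≤ n := Polynomial.natDegree_le_iff_degree_le.2 hp.1
  have hfd : f.natDegree ≤ d := Polynomial.natDegree_le_iff_degree_le.2 hdf
  set g := p * f * cRev d f with hg
  set h := cRev n p * f * cRev d f with hh
  have hhg : h = cRev (n + 2 * d) g := (cRev_pff hpn hfd).symm
  have hhdeg : h.natDegree ≤ n + 2 * d := by rw [hhg]; exact natDegree_cRev_le _ _
  have hgdeg : g.natDegree ≤ n + 2 * d := by
    calc g.natDegree ≤ (p * f).natDegree + (cRev d f).natDegree :=
          Polynomial.natDegree_mul_le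
      _ ≤ (p.natDegree + f.natDegree) + d :=
          add_le_add Polynomial.natDegree_mul_le (natDegree_cRev_le d f)
      _ ≤ n + 2 * d := by omega
  -- Step 1: rewrite the integrand as a finite sum on the unit circle
  have hEq : Set.EqOn
      (fun t : ℂ => (φ.eval t * f.eval t * (cRev d f).eval t * t ^ (-((n : ℤ) + (d : ℤ)))) / (t - z))
      (fun t : ℂ => ∑ m ∈ Finset.range (n + 2 * d + 1),
        h.coeff m * (t ^ ((m : ℤ) - ((n : ℤ) + (d : ℤ))) / (t - z)))
      (Metric.sphere (0:ℂ) 1) := by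
    intro t ht
    obtain ⟨ht0, htz⟩ := sphere_facts hz ht
    simp only
    have h1 : φ.eval t * f.eval t * (cRev d f).eval t = h.eval t := by
      rw [hφ, hh, Polynomial.eval_mul, Polynomial.eval_mul]
    rw [h1, Polynomial.eval_eq_sum_range' (lt_of_le_of_lt hhdeg (Nat.lt_succ_self _)),
      Finset.sum_mul, Finset.sum_div]
    apply Finset.sum_congr rfl
    intro m _
    have h2 : (t : ℂ) ^ (m : ℕ) * t ^ (-((n : ℤ) + (d : ℤ)))
        = t ^ ((m : ℤ) - ((n : ℤ) + (d : ℤ))) := by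
      rw [← zpow_natCast t m, ← zpow_add₀ ht0]
      congr 1
    rw [mul_assoc, h2]
    ring
  rw [circleIntegral.integral_congr zero_le_one hEq]
  -- Step 2: exchange integral and sum
  have hint : ∀ m ∈ Finset.range (n + 2 * d + 1),
      CircleIntegrable (fun t : ℂ =>
        h.coeff m * (t ^ ((m : ℤ) - ((n : ℤ) + (d : ℤ))) / (t - z))) 0 1 := by
    intro m _
    apply ContinuousOn.circleIntegrable (by norm_num)
    intro t ht
    obtain ⟨ht0, htz⟩ := sphere_facts hz ht
    exact (continuousAt_const.mul (((continuousAt_zpow₀ t _ (Or.inl ht0)).div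
      ((continuousAt_id.sub continuousAt_const)) htz))).continuousWithinAt
  rw [circleIntegral_finset_sum _ _ _ _ hint]
  -- Step 3: compute each integral
  have hterm : ∀ m ∈ Finset.range (n + 2 * d + 1),
      (∮ t in C(0, 1), h.coeff m * (t ^ ((m : ℤ) - ((n : ℤ) + (d : ℤ))) / (t - z)))
        = h.coeff m * (if ((m : ℤ) - ((n : ℤ) + (d : ℤ))) < 0 then
            -(2 * Real.pi * Complex.I) * z ^ ((m : ℤ) - ((n : ℤ) + (d : ℤ))) else 0) := by
    intro m _
    rw [circleIntegral.integral_const_mul, circleInt_zpow_div z hz]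
  rw [Finset.sum_congr rfl hterm]
  -- Step 4: kill the vanishing terms
  have hstep4 : ∑ m ∈ Finset.range (n + 2 * d + 1),
        h.coeff m * (if ((m : ℤ) - ((n : ℤ) + (d : ℤ))) < 0 then
          -(2 * Real.pi * Complex.I) * z ^ ((m : ℤ) - ((n : ℤ) + (d : ℤ))) else 0)
      = ∑ m ∈ Finset.range d,
        h.coeff m * (if ((m : ℤ) - ((n : ℤ) + (d : ℤ))) < 0 then
          -(2 * Real.pi * Complex.I) * z ^ ((m : ℤ) - ((n : ℤ) + (d : ℤ))) else 0) := by
    symm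
    apply Finset.sum_subset (Finset.range_subset_range.2 (by omega))
    intro m hm1 hm2
    have hmd : d ≤ m := by
      by_contra hc
      exact hm2 (Finset.mem_range.2 (by omega))
    have hmD : m ≤ n + 2 * d := Nat.lt_succ_iff.1 (Finset.mem_range.1 hm1)
    rcases le_or_gt (n + d) m with hcase | hcase
    · rw [if_neg (by push_cast; omega), mul_zero]
    · have hcoeff : h.coeff m = 0 := by
        rw [hhg, cRev_coeff _ _ (by omega : m ≤ n + 2 * d)]
        have hidx : n + 2 * d - m = d + (n + d - m) := by omega
        rw [hidx, opa_coeff_zero hfd hp (by omega) (by omega)]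
        simp
      rw [hcoeff, zero_mul]
  rw [hstep4, Finset.mul_sum]
  -- Step 5: reindex
  apply Finset.sum_bij' (i := fun (m : ℕ) (_ : m ∈ Finset.range d) => d - m)
    (j := fun (j : ℕ) (_ : j ∈ Finset.Icc 1 d) => d - j)
  · intro m hm
    have := Finset.mem_range.1 hm
    exact Finset.mem_Icc.2 (by omega)
  · intro j hj
    have := Finset.mem_Icc.1 hj
    exact Finset.mem_range.2 (by omega)
  · intro m hm
    have := Finset.mem_range.1 hm
    omega
  · intro j hj
    have := Finset.mem_Icc.1 hj
    omega
  · intro m hm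
    have hmd := Finset.mem_range.1 hm
    have hcond : ((m : ℤ) - ((n : ℤ) + (d : ℤ))) < 0 := by push_cast; omega
    rw [if_pos hcond]
    have hcoeff : h.coeff m = (starRingEnd ℂ) (u (n + d + (d - m))) := by
      rw [hhg, cRev_coeff _ _ (by omega : m ≤ n + 2 * d), hu]
      congr 2
      omega
    rw [hcoeff]
    have hexp : ((m : ℤ) - ((n : ℤ) + (d : ℤ))) = -(n : ℤ) - ((d - m : ℕ) : ℤ) := by
      push_cast [Nat.cast_sub hmd.le]
      ring
    rw [hexp]
    ring
end

section
/- Let k, l be coprime positive integers with θ := kπ/l ∈ (0, π/2], and fix n' ∈ {0, 1, …, 2l − 1}. Suppose t_0, t_1, t_2, t_3 : ℕ → ℂ are functions such that for every n ∈ ℕ with n ≡ n' (mod 2l) the polynomial Q_n(X) := t_0(n) + t_1(n)·X + X^{n+2} + t_2(n)·X^{n+3} + t_3(n)·X^{n+4} has a zero of multiplicity at least 2 at e^{iθ} and a zero of multiplicity at least 2 at e^{−iθ}. Then, as n → ∞ along the arithmetic progression n ≡ n' (mod 2l): t_3(n) = 1 − 2/n + O(n^{−2}), t_2(n) = −2cos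 θ + (2cos θ)/n + O(n^{−2}), t_1(n) = (2cos((n'+3)θ))/n + O(n^{−2}), and t_0(n) = −(2cos((n'+2)θ))/n + O(n^{−2}). -/
open Polynomial Complex Filter
open Topology

/-- The family of polynomials `Q_n(X) = t₀(n) + t₁(n)X + X^{n+2} + t₂(n)X^{n+3} + t₃(n)X^{n+4}`. -/
noncomputable def Qfam (t0 t1 t2 t3 : ℕ → ℂ) (n : ℕ) : Polynomial ℂ :=
  Polynomial.C (t0 n) + Polynomial.C (t1 n) * Polynomial.X + Polynomial.X ^ (n + 2) +
    Polynomial.C (t2 n) * Polynomial.X ^ (n + 3) + Polynomial.C (t3 n) * Polynomial.X ^ (n + 4)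

set_option maxHeartbeats 1000000 in
private lemma glue (S : Set ℕ) (B0 B1 d2 d1 d0 : ℂ) (hd2 : d2 ≠ 0) (f : ℕ → ℂ)
    (hev : ∀ n ∈ S, (n : ℂ) ≠ 0 → (d2 * (n:ℂ)^2 + d1 * (n:ℂ) + d0) ≠ 0 →
      f n = (B0 * (n:ℂ) + B1) / ((n:ℂ) * (d2 * (n:ℂ)^2 + d1 * (n:ℂ) + d0))) :
    Asymptotics.IsBigO (atTop ⊓ Filter.principal S) f (fun n : ℕ => ((n : ℝ) ^ 2)⁻¹) := by
  have hx : Tendsto (fun nn : ℕ => ((nn:ℂ))⁻¹) atTop (𝓝 0) := by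
    have h1 : Tendsto (fun nn : ℕ => ((nn:ℝ))⁻¹) atTop (𝓝 0) :=
      tendsto_inv_atTop_zero.comp tendsto_natCast_atTop_atTop
    have h2 : Tendsto (fun nn : ℕ => ((((nn:ℝ))⁻¹ : ℝ) : ℂ)) atTop (𝓝 ((0:ℝ):ℂ)) :=
      (Complex.continuous_ofReal.tendsto _).comp h1
    simpa using h2
  have hδ : Tendsto (fun nn : ℕ => d2 + d1 * ((nn:ℂ))⁻¹ + d0 * (((nn:ℂ))⁻¹)^2) atTop (𝓝 d2) := by
    have h : Tendsto (fun nn : ℕ => d2 + d1 * ((nn:ℂ))⁻¹ + d0 * (((nn:ℂ))⁻¹)^2) atTop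
        (𝓝 (d2 + d1 * 0 + d0 * 0^2)) :=
      (tendsto_const_nhds.add (tendsto_const_nhds.mul hx)).add
        (tendsto_const_nhds.mul (hx.pow 2))
    simpa using h
  have hδne : ∀ᶠ nn : ℕ in atTop, (d2 + d1 * ((nn:ℂ))⁻¹ + d0 * (((nn:ℂ))⁻¹)^2) ≠ 0 :=
    hδ.eventually (eventually_ne_nhds hd2)
  have hG : Tendsto (fun nn : ℕ =>
      (B0 + B1 * ((nn:ℂ))⁻¹) / (d2 + d1 * ((nn:ℂ))⁻¹ + d0 * (((nn:ℂ))⁻¹)^2)) atTop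
      (𝓝 (B0 / d2)) := by
    apply Tendsto.div _ hδ hd2
    have h : Tendsto (fun nn : ℕ => B0 + B1 * ((nn:ℂ))⁻¹) atTop (𝓝 (B0 + B1 * 0)) :=
      tendsto_const_nhds.add (tendsto_const_nhds.mul hx)
    simpa using h
  have hG1 := hG.isBigO_one ℝ
  have hx2 : Asymptotics.IsBigO atTop (fun nn : ℕ => (((nn:ℂ))⁻¹)^2)
      (fun nn : ℕ => ((nn:ℝ)^2)⁻¹) := by
    apply Asymptotics.isBigO_of_le
    intro nn
    have h1 : ‖(((nn:ℂ))⁻¹)^2‖ = ((nn:ℝ)^2)⁻¹ := by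
      rw [norm_pow, norm_inv, Complex.norm_natCast, ← inv_pow, inv_pow]
    rw [h1, Real.norm_eq_abs]
    exact le_abs_self _
  have hmul := hx2.mul hG1
  have hL : (atTop ⊓ Filter.principal S) ≤ atTop := inf_le_left
  refine ((hmul.mono hL).congr' ?_ ?_)
  · have h1 : ∀ᶠ nn in atTop ⊓ Filter.principal S, nn ∈ S :=
      Filter.Eventually.filter_mono inf_le_right
        (Filter.eventually_principal.mpr fun _ h => h)
    have h2 : ∀ᶠ nn in atTop ⊓ Filter.principal S, 1 ≤ nn :=
      Filter.Eventually.filter_mono hL (Filter.eventually_ge_atTop 1)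
    have h3 := Filter.Eventually.filter_mono hL hδne
    filter_upwards [h1, h2, h3] with nn hS h1n hδn
    have hn0 : (nn:ℂ) ≠ 0 := Nat.cast_ne_zero.mpr (by omega)
    have hQeq : d2 * (nn:ℂ)^2 + d1 * (nn:ℂ) + d0
        = (nn:ℂ)^2 * (d2 + d1 * ((nn:ℂ))⁻¹ + d0 * (((nn:ℂ))⁻¹)^2) := by
      field_simp
    have hQ0 : (d2 * (nn:ℂ)^2 + d1 * (nn:ℂ) + d0) ≠ 0 := by
      rw [hQeq]; exact mul_ne_zero (pow_ne_zero 2 hn0) hδn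
    rw [hev nn hS hn0 hQ0, hQeq]
    field_simp
  · exact Filter.Eventually.of_forall fun nn => by simp

set_option maxHeartbeats 4000000 in
set_option maxRecDepth 100000 in
theorem coeff_asymptotics
    (k l : ℕ) (hk : 0 < k) (hl : 0 < l) (hcop : Nat.Coprime k l)
    (θ : ℝ) (hθ : θ = k * Real.pi / l) (hθI : θ ∈ Set.Ioc 0 (Real.pi / 2))
    (n' : ℕ) (hn' : n' < 2 * l)
    (t0 t1 t2 t3 : ℕ → ℂ)
    (hdouble : ∀ n : ℕ, n % (2 * l) = n' →
      (Qfam t0 t1 t2 t3 n).eval (Complex.exp (θ * Complex.I)) = 0 ∧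
      (Polynomial.derivative (Qfam t0 t1 t2 t3 n)).eval (Complex.exp (θ * Complex.I)) = 0 ∧
      (Qfam t0 t1 t2 t3 n).eval (Complex.exp (-θ * Complex.I)) = 0 ∧
      (Polynomial.derivative (Qfam t0 t1 t2 t3 n)).eval (Complex.exp (-θ * Complex.I)) = 0) :
    Asymptotics.IsBigO (atTop ⊓ Filter.principal {n : ℕ | n % (2 * l) = n'})
      (fun n : ℕ => t3 n - (1 - 2 / (n : ℂ))) (fun n : ℕ => ((n : ℝ) ^ 2)⁻¹) ∧
    Asymptotics.IsBigO (atTop ⊓ Filter.principal {n : ℕ | n % (2 * l) = n'})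
      (fun n : ℕ => t2 n - (-2 * (Real.cos θ : ℂ) + 2 * (Real.cos θ : ℂ) / (n : ℂ)))
      (fun n : ℕ => ((n : ℝ) ^ 2)⁻¹) ∧
    Asymptotics.IsBigO (atTop ⊓ Filter.principal {n : ℕ | n % (2 * l) = n'})
      (fun n : ℕ => t1 n - 2 * (Real.cos ((n' + 3) * θ) : ℂ) / (n : ℂ))
      (fun n : ℕ => ((n : ℝ) ^ 2)⁻¹) ∧
    Asymptotics.IsBigO (atTop ⊓ Filter.principal {n : ℕ | n % (2 * l) = n'})
      (fun n : ℕ => t0 n + 2 * (Real.cos ((n' + 2) * θ) : ℂ) / (n : ℂ))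
      (fun n : ℕ => ((n : ℝ) ^ 2)⁻¹) := by
  obtain ⟨hθ0, hθle⟩ := hθI
  have hπ := Real.pi_pos
  set u : ℂ := Complex.exp (θ * Complex.I) with hu_def
  set U : ℂ := Complex.exp (-θ * Complex.I) with hU_def
  have hu0 : u ≠ 0 := Complex.exp_ne_zero _
  have hU0 : U ≠ 0 := Complex.exp_ne_zero _
  have huU : u * U = 1 := by
    rw [hu_def, hU_def, ← Complex.exp_add,
      show (θ:ℂ) * Complex.I + -(θ:ℂ) * Complex.I = 0 by ring, Complex.exp_zero]
  set p : ℂ := u ^ n' with hp_def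
  set P : ℂ := U ^ n' with hP_def
  have hp0 : p ≠ 0 := pow_ne_zero _ hu0
  have hP0 : P ≠ 0 := pow_ne_zero _ hU0
  have hpP : p * P = 1 := by rw [hp_def, hP_def, ← mul_pow, huU, one_pow]
  have hl0 : ((l:ℂ)) ≠ 0 := Nat.cast_ne_zero.mpr hl.ne'
  have hu2l : u ^ (2 * l) = 1 := by
    rw [hu_def, ← Complex.exp_nat_mul,
      show ((2 * l : ℕ) : ℂ) * ((θ:ℂ) * Complex.I) = ((k:ℤ):ℂ) * (2 * (Real.pi:ℂ) * Complex.I) by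
        push_cast [hθ]; field_simp]
    exact Complex.exp_int_mul_two_pi_mul_I k
  have hU2l : U ^ (2 * l) = 1 := by
    rw [hU_def, ← Complex.exp_nat_mul,
      show ((2 * l : ℕ) : ℂ) * (-(θ:ℂ) * Complex.I) = ((-(k:ℤ)):ℂ) * (2 * (Real.pi:ℂ) * Complex.I) by
        push_cast [hθ]; field_simp]
    exact_mod_cast Complex.exp_int_mul_two_pi_mul_I (-(k:ℤ))
  have hu2 : u ^ 2 ≠ 1 := by
    intro h
    rw [hu_def, ← Complex.exp_nat_mul, Complex.exp_eq_one_iff] at h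
    obtain ⟨m, hm⟩ := h
    have h2 : 2 * θ = m * (2 * Real.pi) := by
      have h3 : ((2 * θ : ℝ) : ℂ) * Complex.I = ((m * (2 * Real.pi) : ℝ) : ℂ) * Complex.I := by
        push_cast at hm ⊢
        linear_combination hm
      have h4 := mul_right_cancel₀ Complex.I_ne_zero h3
      exact_mod_cast h4
    rcases le_or_gt (m:ℝ) 0 with hm0 | hm1
    · nlinarith
    · have hm1' : (1:ℝ) ≤ (m:ℝ) := by
        have : (0:ℤ) < m := by exact_mod_cast hm1
        exact_mod_cast this
      nlinarith
  have huU0 : u - U ≠ 0 := by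
    intro h
    rw [sub_eq_zero] at h
    rw [← h] at huU
    exact hu2 (by rw [sq]; exact huU)
  have hd2ne : ((-1 : ℂ)*u^2*U^4*p*P + (2 : ℂ)*u^3*U^3*p*P + (-1 : ℂ)*u^4*U^2*p*P) ≠ 0 := by
    have hrw : ((-1 : ℂ)*u^2*U^4*p*P + (2 : ℂ)*u^3*U^3*p*P + (-1 : ℂ)*u^4*U^2*p*P) = -(p * P * (u * U)^2 * (u - U)^2) := by ring
    rw [hrw, huU, hpP]
    simpa using pow_ne_zero 2 huU0
  have two_cos : ∀ y : ℝ, (2:ℂ) * ((Real.cos y : ℝ) : ℂ)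
      = Complex.exp ((y:ℂ) * Complex.I) + Complex.exp (-(y:ℂ) * Complex.I) := by
    intro y
    rw [Complex.ofReal_cos, Complex.exp_mul_I,
      show (-(y:ℂ)) * Complex.I = ((-(y:ℂ)) * Complex.I) by ring, Complex.exp_mul_I,
      Complex.cos_neg, Complex.sin_neg]
    ring
  have hexp_pow : ∀ mm : ℕ, Complex.exp (((mm : ℝ) * θ : ℝ) * Complex.I) = u ^ mm := by
    intro mm
    rw [hu_def, ← Complex.exp_nat_mul]
    congr 1
    push_cast
    ring
  have hexp_pow' : ∀ mm : ℕ, Complex.exp (-(((mm : ℝ) * θ : ℝ):ℂ) * Complex.I) = U ^ mm := by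
    intro mm
    rw [hU_def, ← Complex.exp_nat_mul]
    congr 1
    push_cast
    ring
  have hcosth : (2:ℂ) * (((Real.cos θ) : ℂ)) = u + U := by
    rw [two_cos θ, hu_def, hU_def]
  have hcos3 : (2:ℂ) * (((Real.cos (((n' : ℝ) + 3) * θ)) : ℂ)) = p * u^3 + P * U^3 := by
    rw [two_cos (((n' : ℝ) + 3) * θ)]
    have h1 : Complex.exp (((((n' : ℝ) + 3) * θ : ℝ):ℂ) * Complex.I) = u ^ (n' + 3) := by
      rw [← hexp_pow (n' + 3)]
      congr 2
      push_cast
      ring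
    have h2 : Complex.exp (-((((n' : ℝ) + 3) * θ : ℝ):ℂ) * Complex.I) = U ^ (n' + 3) := by
      rw [← hexp_pow' (n' + 3)]
      congr 2
      push_cast
      ring
    rw [h1, h2, hp_def, hP_def, ← pow_add, ← pow_add]
  have hcos2 : (2:ℂ) * (((Real.cos (((n' : ℝ) + 2) * θ)) : ℂ)) = p * u^2 + P * U^2 := by
    rw [two_cos (((n' : ℝ) + 2) * θ)]
    have h1 : Complex.exp (((((n' : ℝ) + 2) * θ : ℝ):ℂ) * Complex.I) = u ^ (n' + 2) := by
      rw [← hexp_pow (n' + 2)]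
      congr 2
      push_cast
      ring
    have h2 : Complex.exp (-((((n' : ℝ) + 2) * θ : ℝ):ℂ) * Complex.I) = U ^ (n' + 2) := by
      rw [← hexp_pow' (n' + 2)]
      congr 2
      push_cast
      ring
    rw [h1, h2, hp_def, hP_def, ← pow_add, ← pow_add]
  have main : ∀ n : ℕ, n % (2 * l) = n' → (n:ℂ) ≠ 0 → (((-1 : ℂ)*u^2*U^4*p*P + (2 : ℂ)*u^3*U^3*p*P + (-1 : ℂ)*u^4*U^2*p*P)*(n:ℂ)^2 + ((-6 : ℂ)*u^2*U^4*p*P + (12 : ℂ)*u^3*U^3*p*P + (-6 : ℂ)*u^4*U^2*p*P)*(n:ℂ) + (U^6*P^2 + (-9 : ℂ)*u^2*U^4*p*P + (16 : ℂ)*u^3*U^3*p*P + (-9 : ℂ)*u^4*U^2*p*P + u^6*p^2)) ≠ 0 →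
      ((t3 n - (1 - 2 / (n:ℂ))) = ((U^4*P^2 + (-1 : ℂ)*U^6*P^2 + (-4 : ℂ)*u*U^3*p*P + (6 : ℂ)*u^2*U^2*p*P + (-3 : ℂ)*u^2*U^4*p*P + (-4 : ℂ)*u^3*U*p*P + (8 : ℂ)*u^3*U^3*p*P + u^4*p^2 + (-3 : ℂ)*u^4*U^2*p*P + (-1 : ℂ)*u^6*p^2)*(n:ℂ) + ((2 : ℂ)*U^6*P^2 + (-18 : ℂ)*u^2*U^4*p*P + (32 : ℂ)*u^3*U^3*p*P + (-18 : ℂ)*u^4*U^2*p*P + (2 : ℂ)*u^6*p^2)) / ((n:ℂ) * (((-1 : ℂ)*u^2*U^4*p*P + (2 : ℂ)*u^3*U^3*p*P + (-1 : ℂ)*u^4*U^2*p*P)*(n:ℂ)^2 + ((-6 : ℂ)*u^2*U^4*p*P + (12 : ℂ)*u^3*U^3*p*P + (-6 : ℂ)*u^4*U^2*p*P)*(n:ℂ) + (U^6*P^2 + (-9 : ℂ)*u^2*U^4*p*P + (16 : ℂ)*u^3*U^3*p*P + (-9 : ℂ)*u^4*U^2*p*P + u^6*p^2)))) ∧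
      ((t2 n - (-2 * (((Real.cos θ) : ℂ)) + 2 * (((Real.cos θ) : ℂ)) / (n:ℂ))) = (((-2 : ℂ)*U^5*P^2 + U^7*P^2 + (6 : ℂ)*u*U^4*p*P + u*U^6*P^2 + (-4 : ℂ)*u^2*U^3*p*P + (-3 : ℂ)*u^2*U^5*p*P + (-4 : ℂ)*u^3*U^2*p*P + u^3*U^4*p*P + (6 : ℂ)*u^4*U*p*P + u^4*U^3*p*P + (-2 : ℂ)*u^5*p^2 + (-3 : ℂ)*u^5*U^2*p*P + u^6*U*p^2 + u^7*p^2)*(n:ℂ) + ((-1 : ℂ)*U^7*P^2 + (-1 : ℂ)*u*U^6*P^2 + (9 : ℂ)*u^2*U^5*p*P + (-7 : ℂ)*u^3*U^4*p*P + (-7 : ℂ)*u^4*U^3*p*P + (9 : ℂ)*u^5*U^2*p*P + (-1 : ℂ)*u^6*U*p^2 + (-1 : ℂ)*u^7*p^2)) / ((n:ℂ) * (((-1 : ℂ)*u^2*U^4*p*P + (2 : ℂ)*u^3*U^3*p*P + (-1 : ℂ)*u^4*U^2*p*P)*(n:ℂ)^2 + ((-6 : ℂ)*u^2*U^4*p*P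 + (12 : ℂ)*u^3*U^3*p*P + (-6 : ℂ)*u^4*U^2*p*P)*(n:ℂ) + (U^6*P^2 + (-9 : ℂ)*u^2*U^4*p*P + (16 : ℂ)*u^3*U^3*p*P + (-9 : ℂ)*u^4*U^2*p*P + u^6*p^2)))) ∧
      ((t1 n - 2 * (((Real.cos (((n' : ℝ) + 3) * θ)) : ℂ)) / (n:ℂ)) = (((-2 : ℂ)*u*U^6*p*P^2 + (6 : ℂ)*u^2*U^5*p*P^2 + (6 : ℂ)*u^2*U^7*p*P^2 + (-4 : ℂ)*u^3*U^4*p*P^2 + (-12 : ℂ)*u^3*U^6*p*P^2 + (-4 : ℂ)*u^4*U^3*p^2*P + (6 : ℂ)*u^4*U^5*p*P^2 + (6 : ℂ)*u^5*U^2*p^2*P + (6 : ℂ)*u^5*U^4*p^2*P + (-2 : ℂ)*u^6*U*p^2*P + (-12 : ℂ)*u^6*U^3*p^2*P + (6 : ℂ)*u^7*U^2*p^2*P)*(n:ℂ) + ((-1 : ℂ)*U^9*P^3 + (9 : ℂ)*u^2*U^7*p*P^2 + (-17 : ℂ)*u^3*U^6*p*P^2 + (9 : ℂ)*u^4*U^5*p*P^2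 + (9 : ℂ)*u^5*U^4*p^2*P + (-17 : ℂ)*u^6*U^3*p^2*P + (9 : ℂ)*u^7*U^2*p^2*P + (-1 : ℂ)*u^9*p^3)) / ((n:ℂ) * (((-1 : ℂ)*u^2*U^4*p*P + (2 : ℂ)*u^3*U^3*p*P + (-1 : ℂ)*u^4*U^2*p*P)*(n:ℂ)^2 + ((-6 : ℂ)*u^2*U^4*p*P + (12 : ℂ)*u^3*U^3*p*P + (-6 : ℂ)*u^4*U^2*p*P)*(n:ℂ) + (U^6*P^2 + (-9 : ℂ)*u^2*U^4*p*P + (16 : ℂ)*u^3*U^3*p*P + (-9 : ℂ)*u^4*U^2*p*P + u^6*p^2)))) ∧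
      ((t0 n + 2 * (((Real.cos (((n' : ℝ) + 2) * θ)) : ℂ)) / (n:ℂ)) = (((-5 : ℂ)*u^2*U^6*p*P^2 + (8 : ℂ)*u^3*U^5*p*P^2 + (-3 : ℂ)*u^4*U^4*p*P^2 + (-3 : ℂ)*u^4*U^4*p^2*P + (8 : ℂ)*u^5*U^3*p^2*P + (-5 : ℂ)*u^6*U^2*p^2*P)*(n:ℂ) + (U^8*P^3 + (-8 : ℂ)*u^2*U^6*p*P^2 + (16 : ℂ)*u^3*U^5*p*P^2 + (-9 : ℂ)*u^4*U^4*p*P^2 + (-9 : ℂ)*u^4*U^4*p^2*P + (16 : ℂ)*u^5*U^3*p^2*P + (-8 : ℂ)*u^6*U^2*p^2*P + u^8*p^3)) / ((n:ℂ) * (((-1 : ℂ)*u^2*U^4*p*P + (2 : ℂ)*u^3*U^3*p*P + (-1 : ℂ)*u^4*U^2*p*P)*(n:ℂ)^2 + ((-6 : ℂ)*u^2*U^4*p*P + (12 : ℂ)*u^3*U^3*p*P + (-6 : ℂ)*u^4*U^2*p*P)*(n:ℂ) + (U^6*P^2 + (-9 : ℂ)*u^2*U^4*p*P + (16 : ℂ)*u^3*U^3*p*P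 + (-9 : ℂ)*u^4*U^2*p*P + u^6*p^2)))) := by
    intro n hn hn0 hD0
    have hnm : (n:ℂ) * ((n:ℂ))⁻¹ = 1 := mul_inv_cancel₀ hn0
    obtain ⟨q1, q2, q3, q4⟩ := hdouble n hn
    have hun : u ^ n = p := by
      conv_lhs => rw [← Nat.div_add_mod n (2 * l)]
      rw [hn, pow_add, pow_mul, hu2l, one_pow, one_mul, hp_def]
    have hUn : U ^ n = P := by
      conv_lhs => rw [← Nat.div_add_mod n (2 * l)]
      rw [hn, pow_add, pow_mul, hU2l, one_pow, one_mul, hP_def]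
    simp only [Qfam, derivative_add, derivative_C, derivative_C_mul, derivative_X,
      derivative_X_pow, eval_add, eval_mul, eval_pow, eval_C, eval_X, eval_natCast,
      eval_one, mul_one, zero_add, eval_zero] at q1 q2 q3 q4
    rw [show n + 2 - 1 = n + 1 from by omega, show n + 3 - 1 = n + 2 from by omega,
      show n + 4 - 1 = n + 3 from by omega] at q2 q4
    have hup1 : u ^ (n + 1) = p * u ^ 1 := by rw [pow_add, hun]
    have hup2 : u ^ (n + 2) = p * u ^ 2 := by rw [pow_add, hun]
    have hup3 : u ^ (n + 3) = p * u ^ 3 := by rw [pow_add, hun]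
    have hup4 : u ^ (n + 4) = p * u ^ 4 := by rw [pow_add, hun]
    have hUp1 : U ^ (n + 1) = P * U ^ 1 := by rw [pow_add, hUn]
    have hUp2 : U ^ (n + 2) = P * U ^ 2 := by rw [pow_add, hUn]
    have hUp3 : U ^ (n + 3) = P * U ^ 3 := by rw [pow_add, hUn]
    have hUp4 : U ^ (n + 4) = P * U ^ 4 := by rw [pow_add, hUn]
    rw [hup2, hup3, hup4] at q1
    rw [hup1, hup2, hup3] at q2
    rw [hUp2, hUp3, hUp4] at q3
    rw [hUp1, hUp2, hUp3] at q4
    push_cast at q2 q4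
    have e1 : t0 n + t1 n * u + p * u^2 + t2 n * (p * u^3) + t3 n * (p * u^4) = 0 := by
      linear_combination q1
    have e2 : t1 n + ((n:ℂ)+2) * (p * u) + t2 n * (((n:ℂ)+3) * (p * u^2))
        + t3 n * (((n:ℂ)+4) * (p * u^3)) = 0 := by
      linear_combination q2
    have e3 : t0 n + t1 n * U + P * U^2 + t2 n * (P * U^3) + t3 n * (P * U^4) = 0 := by
      linear_combination q3
    have e4 : t1 n + ((n:ℂ)+2) * (P * U) + t2 n * (((n:ℂ)+3) * (P * U^2))
        + t3 n * (((n:ℂ)+4) * (P * U^3)) = 0 := by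
      linear_combination q4
    have hT0 : (((-1 : ℂ)*u^2*U^4*p*P + (2 : ℂ)*u^3*U^3*p*P + (-1 : ℂ)*u^4*U^2*p*P)*(n:ℂ)^2 + ((-6 : ℂ)*u^2*U^4*p*P + (12 : ℂ)*u^3*U^3*p*P + (-6 : ℂ)*u^4*U^2*p*P)*(n:ℂ) + (U^6*P^2 + (-9 : ℂ)*u^2*U^4*p*P + (16 : ℂ)*u^3*U^3*p*P + (-9 : ℂ)*u^4*U^2*p*P + u^6*p^2)) * t0 n = (u^2*U^6*p*P^2 + u^2*U^6*p*P^2*(n:ℂ) + (-4 : ℂ)*u^3*U^5*p*P^2 + (-2 : ℂ)*u^3*U^5*p*P^2*(n:ℂ) + (3 : ℂ)*u^4*U^4*p*P^2 + u^4*U^4*p*P^2*(n:ℂ) + (3 : ℂ)*u^4*U^4*p^2*P + u^4*U^4*p^2*P*(n:ℂ) + (-4 : ℂ)*u^5*U^3*p^2*P + (-2 : ℂ)*u^5*U^3*p^2*P*(n:ℂ) + u^6*U^2*p^2*P + u^6*U^2*p^2*P*(n:ℂ)) := by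
      linear_combination (U^6*P^2 + (-9 : ℂ)*u^2*U^4*p*P + (-6 : ℂ)*u^2*U^4*p*P*(n:ℂ) + (-1 : ℂ)*u^2*U^4*p*P*(n:ℂ)^2 + (8 : ℂ)*u^3*U^3*p*P + (6 : ℂ)*u^3*U^3*p*P*(n:ℂ) + u^3*U^3*p*P*(n:ℂ)^2) * e1 + ((-1 : ℂ)*u*U^6*P^2 + (3 : ℂ)*u^3*U^4*p*P + u^3*U^4*p*P*(n:ℂ) + (-2 : ℂ)*u^4*U^3*p*P + (-1 : ℂ)*u^4*U^3*p*P*(n:ℂ)) * e2 + ((8 : ℂ)*u^3*U^3*p*P + (6 : ℂ)*u^3*U^3*p*P*(n:ℂ) + u^3*U^3*p*P*(n:ℂ)^2 + (-9 : ℂ)*u^4*U^2*p*P + (-6 : ℂ)*u^4*U^2*p*P*(n:ℂ) + (-1 : ℂ)*u^4*U^2*p*P*(n:ℂ)^2 + u^6*p^2) * e3 + ((-2 : ℂ)*u^3*U^4*p*P + (-1 : ℂ)*u^3*U^4*p*P*(n:ℂ) + (3 : ℂ)*u^4*U^3*p*P + u^4*U^3*p*P*(n:ℂ) + (-1 : ℂ)*u^6*U*p^2)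 * e4
    have hT1 : (((-1 : ℂ)*u^2*U^4*p*P + (2 : ℂ)*u^3*U^3*p*P + (-1 : ℂ)*u^4*U^2*p*P)*(n:ℂ)^2 + ((-6 : ℂ)*u^2*U^4*p*P + (12 : ℂ)*u^3*U^3*p*P + (-6 : ℂ)*u^4*U^2*p*P)*(n:ℂ) + (U^6*P^2 + (-9 : ℂ)*u^2*U^4*p*P + (16 : ℂ)*u^3*U^3*p*P + (-9 : ℂ)*u^4*U^2*p*P + u^6*p^2)) * t1 n = ((-2 : ℂ)*u*U^6*p*P^2 + (-1 : ℂ)*u*U^6*p*P^2*(n:ℂ) + (6 : ℂ)*u^2*U^5*p*P^2 + (2 : ℂ)*u^2*U^5*p*P^2*(n:ℂ) + (-4 : ℂ)*u^3*U^4*p*P^2 + (-1 : ℂ)*u^3*U^4*p*P^2*(n:ℂ) + (-4 : ℂ)*u^4*U^3*p^2*P + (-1 : ℂ)*u^4*U^3*p^2*P*(n:ℂ) + (6 : ℂ)*u^5*U^2*p^2*P + (2 : ℂ)*u^5*U^2*p^2*P*(n:ℂ) + (-2 : ℂ)*u^6*U*p^2*P + (-1 : ℂ)*u^6*U*p^2*P*(n:ℂ))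 := by
      linear_combination ((12 : ℂ)*u^2*U^3*p*P + (7 : ℂ)*u^2*U^3*p*P*(n:ℂ) + u^2*U^3*p*P*(n:ℂ)^2 + (-12 : ℂ)*u^3*U^2*p*P + (-7 : ℂ)*u^3*U^2*p*P*(n:ℂ) + (-1 : ℂ)*u^3*U^2*p*P*(n:ℂ)^2) * e1 + (U^6*P^2 + (-4 : ℂ)*u^3*U^3*p*P + (-1 : ℂ)*u^3*U^3*p*P*(n:ℂ) + (3 : ℂ)*u^4*U^2*p*P + u^4*U^2*p*P*(n:ℂ)) * e2 + ((-12 : ℂ)*u^2*U^3*p*P + (-7 : ℂ)*u^2*U^3*p*P*(n:ℂ) + (-1 : ℂ)*u^2*U^3*p*P*(n:ℂ)^2 + (12 : ℂ)*u^3*U^2*p*P + (7 : ℂ)*u^3*U^2*p*P*(n:ℂ) + u^3*U^2*p*P*(n:ℂ)^2) * e3 + ((3 : ℂ)*u^2*U^4*p*P + u^2*U^4*p*P*(n:ℂ) + (-4 : ℂ)*u^3*U^3*p*P + (-1 : ℂ)*u^3*U^3*p*P*(n:ℂ) + u^6*p^2) * e4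
    have hT2 : (((-1 : ℂ)*u^2*U^4*p*P + (2 : ℂ)*u^3*U^3*p*P + (-1 : ℂ)*u^4*U^2*p*P)*(n:ℂ)^2 + ((-6 : ℂ)*u^2*U^4*p*P + (12 : ℂ)*u^3*U^3*p*P + (-6 : ℂ)*u^4*U^2*p*P)*(n:ℂ) + (U^6*P^2 + (-9 : ℂ)*u^2*U^4*p*P + (16 : ℂ)*u^3*U^3*p*P + (-9 : ℂ)*u^4*U^2*p*P + u^6*p^2)) * t2 n = ((-2 : ℂ)*U^5*P^2 + (6 : ℂ)*u*U^4*p*P + (5 : ℂ)*u*U^4*p*P*(n:ℂ) + u*U^4*p*P*(n:ℂ)^2 + (-4 : ℂ)*u^2*U^3*p*P + (-5 : ℂ)*u^2*U^3*p*P*(n:ℂ) + (-1 : ℂ)*u^2*U^3*p*P*(n:ℂ)^2 + (-4 : ℂ)*u^3*U^2*p*P + (-5 : ℂ)*u^3*U^2*p*P*(n:ℂ) + (-1 : ℂ)*u^3*U^2*p*P*(n:ℂ)^2 + (6 : ℂ)*u^4*U*p*P + (5 : ℂ)*u^4*U*p*P*(n:ℂ) + u^4*U*p*P*(n:ℂ)^2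 + (-2 : ℂ)*u^5*p^2) := by
      linear_combination ((-4 : ℂ)*U^3*P + (-1 : ℂ)*U^3*P*(n:ℂ) + (4 : ℂ)*u^3*p + u^3*p*(n:ℂ)) * e1 + ((-3 : ℂ)*U^4*P + (-1 : ℂ)*U^4*P*(n:ℂ) + (4 : ℂ)*u*U^3*P + u*U^3*P*(n:ℂ) + (-1 : ℂ)*u^4*p) * e2 + ((4 : ℂ)*U^3*P + U^3*P*(n:ℂ) + (-4 : ℂ)*u^3*p + (-1 : ℂ)*u^3*p*(n:ℂ)) * e3 + ((-1 : ℂ)*U^4*P + (4 : ℂ)*u^3*U*p + u^3*U*p*(n:ℂ) + (-3 : ℂ)*u^4*p + (-1 : ℂ)*u^4*p*(n:ℂ)) * e4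
    have hT3 : (((-1 : ℂ)*u^2*U^4*p*P + (2 : ℂ)*u^3*U^3*p*P + (-1 : ℂ)*u^4*U^2*p*P)*(n:ℂ)^2 + ((-6 : ℂ)*u^2*U^4*p*P + (12 : ℂ)*u^3*U^3*p*P + (-6 : ℂ)*u^4*U^2*p*P)*(n:ℂ) + (U^6*P^2 + (-9 : ℂ)*u^2*U^4*p*P + (16 : ℂ)*u^3*U^3*p*P + (-9 : ℂ)*u^4*U^2*p*P + u^6*p^2)) * t3 n = (U^4*P^2 + (-4 : ℂ)*u*U^3*p*P + (-4 : ℂ)*u*U^3*p*P*(n:ℂ) + (-1 : ℂ)*u*U^3*p*P*(n:ℂ)^2 + (6 : ℂ)*u^2*U^2*p*P + (8 : ℂ)*u^2*U^2*p*P*(n:ℂ) + (2 : ℂ)*u^2*U^2*p*P*(n:ℂ)^2 + (-4 : ℂ)*u^3*U*p*P + (-4 : ℂ)*u^3*U*p*P*(n:ℂ) + (-1 : ℂ)*u^3*U*p*P*(n:ℂ)^2 + u^4*p^2) := by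
      linear_combination ((3 : ℂ)*U^2*P + U^2*P*(n:ℂ) + (-3 : ℂ)*u^2*p + (-1 : ℂ)*u^2*p*(n:ℂ)) * e1 + ((2 : ℂ)*U^3*P + U^3*P*(n:ℂ) + (-3 : ℂ)*u*U^2*P + (-1 : ℂ)*u*U^2*P*(n:ℂ) + u^3*p) * e2 + ((-3 : ℂ)*U^2*P + (-1 : ℂ)*U^2*P*(n:ℂ) + (3 : ℂ)*u^2*p + u^2*p*(n:ℂ)) * e3 + (U^3*P + (-3 : ℂ)*u^2*U*p + (-1 : ℂ)*u^2*U*p*(n:ℂ) + (2 : ℂ)*u^3*p + u^3*p*(n:ℂ)) * e4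
    have key0 : t0 n + 2 * (((Real.cos (((n' : ℝ) + 2) * θ)) : ℂ)) / (n:ℂ) = (((-5 : ℂ)*u^2*U^6*p*P^2 + (8 : ℂ)*u^3*U^5*p*P^2 + (-3 : ℂ)*u^4*U^4*p*P^2 + (-3 : ℂ)*u^4*U^4*p^2*P + (8 : ℂ)*u^5*U^3*p^2*P + (-5 : ℂ)*u^6*U^2*p^2*P)*(n:ℂ) + (U^8*P^3 + (-8 : ℂ)*u^2*U^6*p*P^2 + (16 : ℂ)*u^3*U^5*p*P^2 + (-9 : ℂ)*u^4*U^4*p*P^2 + (-9 : ℂ)*u^4*U^4*p^2*P + (16 : ℂ)*u^5*U^3*p^2*P + (-8 : ℂ)*u^6*U^2*p^2*P + u^8*p^3)) / ((n:ℂ) * (((-1 : ℂ)*u^2*U^4*p*P + (2 : ℂ)*u^3*U^3*p*P + (-1 : ℂ)*u^4*U^2*p*P)*(n:ℂ)^2 + ((-6 : ℂ)*u^2*U^4*p*P + (12 : ℂ)*u^3*U^3*p*P + (-6 : ℂ)*u^4*U^2*p*P)*(n:ℂ) + (U^6*P^2 + (-9 : ℂ)*u^2*U^4*p*P + (16 :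 ℂ)*u^3*U^3*p*P + (-9 : ℂ)*u^4*U^2*p*P + u^6*p^2))) := by
      rw [eq_div_iff (mul_ne_zero hn0 hD0)]
      linear_combination (n:ℂ) * hT0 + (U^8*P^3 + (-8 : ℂ)*u^2*U^6*p*P^2 + (-6 : ℂ)*u^2*U^6*p*P^2*(n:ℂ) + (-1 : ℂ)*u^2*U^6*p*P^2*(n:ℂ)^2 + (16 : ℂ)*u^3*U^5*p*P^2 + (12 : ℂ)*u^3*U^5*p*P^2*(n:ℂ) + (2 : ℂ)*u^3*U^5*p*P^2*(n:ℂ)^2 + (-9 : ℂ)*u^4*U^4*p*P^2 + (-6 : ℂ)*u^4*U^4*p*P^2*(n:ℂ) + (-1 : ℂ)*u^4*U^4*p*P^2*(n:ℂ)^2 + (-9 : ℂ)*u^4*U^4*p^2*P + (-6 : ℂ)*u^4*U^4*p^2*P*(n:ℂ) + (-1 : ℂ)*u^4*U^4*p^2*P*(n:ℂ)^2 + (16 : ℂ)*u^5*U^3*p^2*P + (12 : ℂ)*u^5*U^3*p^2*P*(n:ℂ) + (2 : ℂ)*u^5*U^3*p^2*P*(n:ℂ)^2 + (-8 : ℂ)*u^6*U^2*p^2*P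 + (-6 : ℂ)*u^6*U^2*p^2*P*(n:ℂ) + (-1 : ℂ)*u^6*U^2*p^2*P*(n:ℂ)^2 + u^8*p^3) * hnm + (U^6*P^2*(n:ℂ)*(n:ℂ)⁻¹ + (-9 : ℂ)*u^2*U^4*p*P*(n:ℂ)*(n:ℂ)⁻¹ + (-6 : ℂ)*u^2*U^4*p*P*(n:ℂ)^2*(n:ℂ)⁻¹ + (-1 : ℂ)*u^2*U^4*p*P*(n:ℂ)^3*(n:ℂ)⁻¹ + (16 : ℂ)*u^3*U^3*p*P*(n:ℂ)*(n:ℂ)⁻¹ + (12 : ℂ)*u^3*U^3*p*P*(n:ℂ)^2*(n:ℂ)⁻¹ + (2 : ℂ)*u^3*U^3*p*P*(n:ℂ)^3*(n:ℂ)⁻¹ + (-9 : ℂ)*u^4*U^2*p*P*(n:ℂ)*(n:ℂ)⁻¹ + (-6 : ℂ)*u^4*U^2*p*P*(n:ℂ)^2*(n:ℂ)⁻¹ + (-1 : ℂ)*u^4*U^2*p*P*(n:ℂ)^3*(n:ℂ)⁻¹ + u^6*p^2*(n:ℂ)*(n:ℂ)⁻¹) * hcos2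
    have key1 : t1 n - 2 * (((Real.cos (((n' : ℝ) + 3) * θ)) : ℂ)) / (n:ℂ) = (((-2 : ℂ)*u*U^6*p*P^2 + (6 : ℂ)*u^2*U^5*p*P^2 + (6 : ℂ)*u^2*U^7*p*P^2 + (-4 : ℂ)*u^3*U^4*p*P^2 + (-12 : ℂ)*u^3*U^6*p*P^2 + (-4 : ℂ)*u^4*U^3*p^2*P + (6 : ℂ)*u^4*U^5*p*P^2 + (6 : ℂ)*u^5*U^2*p^2*P + (6 : ℂ)*u^5*U^4*p^2*P + (-2 : ℂ)*u^6*U*p^2*P + (-12 : ℂ)*u^6*U^3*p^2*P + (6 : ℂ)*u^7*U^2*p^2*P)*(n:ℂ) + ((-1 : ℂ)*U^9*P^3 + (9 : ℂ)*u^2*U^7*p*P^2 + (-17 : ℂ)*u^3*U^6*p*P^2 + (9 : ℂ)*u^4*U^5*p*P^2 + (9 : ℂ)*u^5*U^4*p^2*P + (-17 : ℂ)*u^6*U^3*p^2*P + (9 : ℂ)*u^7*U^2*p^2*P + (-1 : ℂ)*u^9*p^3)) / ((n:ℂ) * (((-1 : ℂ)*u^2*U^4*p*P + (2 : ℂ)*u^3*U^3*p*P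 + (-1 : ℂ)*u^4*U^2*p*P)*(n:ℂ)^2 + ((-6 : ℂ)*u^2*U^4*p*P + (12 : ℂ)*u^3*U^3*p*P + (-6 : ℂ)*u^4*U^2*p*P)*(n:ℂ) + (U^6*P^2 + (-9 : ℂ)*u^2*U^4*p*P + (16 : ℂ)*u^3*U^3*p*P + (-9 : ℂ)*u^4*U^2*p*P + u^6*p^2))) := by
      rw [eq_div_iff (mul_ne_zero hn0 hD0)]
      linear_combination (n:ℂ) * hT1 + (u*U^6*p*P^2*(n:ℂ)^2 + (-2 : ℂ)*u^2*U^5*p*P^2*(n:ℂ)^2 + u^3*U^4*p*P^2*(n:ℂ)^2 + u^4*U^3*p^2*P*(n:ℂ)^2 + (-2 : ℂ)*u^5*U^2*p^2*P*(n:ℂ)^2 + u^6*U*p^2*P*(n:ℂ)^2) * huU + ((-1 : ℂ)*U^9*P^3 + (9 : ℂ)*u^2*U^7*p*P^2 + (6 : ℂ)*u^2*U^7*p*P^2*(n:ℂ) + u^2*U^7*p*P^2*(n:ℂ)^2 + (-17 : ℂ)*u^3*U^6*p*P^2 + (-12 : ℂ)*u^3*U^6*p*P^2*(n:ℂ) +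 (-2 : ℂ)*u^3*U^6*p*P^2*(n:ℂ)^2 + (9 : ℂ)*u^4*U^5*p*P^2 + (6 : ℂ)*u^4*U^5*p*P^2*(n:ℂ) + u^4*U^5*p*P^2*(n:ℂ)^2 + (9 : ℂ)*u^5*U^4*p^2*P + (6 : ℂ)*u^5*U^4*p^2*P*(n:ℂ) + u^5*U^4*p^2*P*(n:ℂ)^2 + (-17 : ℂ)*u^6*U^3*p^2*P + (-12 : ℂ)*u^6*U^3*p^2*P*(n:ℂ) + (-2 : ℂ)*u^6*U^3*p^2*P*(n:ℂ)^2 + (9 : ℂ)*u^7*U^2*p^2*P + (6 : ℂ)*u^7*U^2*p^2*P*(n:ℂ) + u^7*U^2*p^2*P*(n:ℂ)^2 + (-1 : ℂ)*u^9*p^3) * hnm + ((-1 : ℂ)*U^6*P^2*(n:ℂ)*(n:ℂ)⁻¹ + (9 : ℂ)*u^2*U^4*p*P*(n:ℂ)*(n:ℂ)⁻¹ + (6 : ℂ)*u^2*U^4*p*P*(n:ℂ)^2*(n:ℂ)⁻¹ + u^2*U^4*p*P*(n:ℂ)^3*(n:ℂ)⁻¹ + (-16 : ℂ)*u^3*U^3*p*P*(n:ℂ)*(n:ℂ)⁻¹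 + (-12 : ℂ)*u^3*U^3*p*P*(n:ℂ)^2*(n:ℂ)⁻¹ + (-2 : ℂ)*u^3*U^3*p*P*(n:ℂ)^3*(n:ℂ)⁻¹ + (9 : ℂ)*u^4*U^2*p*P*(n:ℂ)*(n:ℂ)⁻¹ + (6 : ℂ)*u^4*U^2*p*P*(n:ℂ)^2*(n:ℂ)⁻¹ + u^4*U^2*p*P*(n:ℂ)^3*(n:ℂ)⁻¹ + (-1 : ℂ)*u^6*p^2*(n:ℂ)*(n:ℂ)⁻¹) * hcos3
    have key2 : t2 n - (-2 * (((Real.cos θ) : ℂ)) + 2 * (((Real.cos θ) : ℂ)) / (n:ℂ)) = (((-2 : ℂ)*U^5*P^2 + U^7*P^2 + (6 : ℂ)*u*U^4*p*P + u*U^6*P^2 + (-4 : ℂ)*u^2*U^3*p*P + (-3 : ℂ)*u^2*U^5*p*P + (-4 : ℂ)*u^3*U^2*p*P + u^3*U^4*p*P + (6 : ℂ)*u^4*U*p*P + u^4*U^3*p*P + (-2 : ℂ)*u^5*p^2 + (-3 : ℂ)*u^5*U^2*p*P + u^6*U*p^2 + u^7*p^2)*(n:ℂ) + ((-1 : ℂ)*U^7*P^2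 + (-1 : ℂ)*u*U^6*P^2 + (9 : ℂ)*u^2*U^5*p*P + (-7 : ℂ)*u^3*U^4*p*P + (-7 : ℂ)*u^4*U^3*p*P + (9 : ℂ)*u^5*U^2*p*P + (-1 : ℂ)*u^6*U*p^2 + (-1 : ℂ)*u^7*p^2)) / ((n:ℂ) * (((-1 : ℂ)*u^2*U^4*p*P + (2 : ℂ)*u^3*U^3*p*P + (-1 : ℂ)*u^4*U^2*p*P)*(n:ℂ)^2 + ((-6 : ℂ)*u^2*U^4*p*P + (12 : ℂ)*u^3*U^3*p*P + (-6 : ℂ)*u^4*U^2*p*P)*(n:ℂ) + (U^6*P^2 + (-9 : ℂ)*u^2*U^4*p*P + (16 : ℂ)*u^3*U^3*p*P + (-9 : ℂ)*u^4*U^2*p*P + u^6*p^2))) := by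
      rw [eq_div_iff (mul_ne_zero hn0 hD0)]
      linear_combination (n:ℂ) * hT2 + ((-5 : ℂ)*u*U^4*p*P*(n:ℂ)^2 + (-1 : ℂ)*u*U^4*p*P*(n:ℂ)^3 + (5 : ℂ)*u^2*U^3*p*P*(n:ℂ)^2 + u^2*U^3*p*P*(n:ℂ)^3 + (5 : ℂ)*u^3*U^2*p*P*(n:ℂ)^2 + u^3*U^2*p*P*(n:ℂ)^3 + (-5 : ℂ)*u^4*U*p*P*(n:ℂ)^2 + (-1 : ℂ)*u^4*U*p*P*(n:ℂ)^3) * huU + ((-1 : ℂ)*U^7*P^2 + (-1 : ℂ)*u*U^6*P^2 + (9 : ℂ)*u^2*U^5*p*P + (6 : ℂ)*u^2*U^5*p*P*(n:ℂ) + u^2*U^5*p*P*(n:ℂ)^2 + (-7 : ℂ)*u^3*U^4*p*P + (-6 : ℂ)*u^3*U^4*p*P*(n:ℂ) + (-1 : ℂ)*u^3*U^4*p*P*(n:ℂ)^2 + (-7 : ℂ)*u^4*U^3*p*P + (-6 : ℂ)*u^4*U^3*p*P*(n:ℂ) + (-1 : ℂ)*u^4*U^3*p*P*(n:ℂ)^2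 + (9 : ℂ)*u^5*U^2*p*P + (6 : ℂ)*u^5*U^2*p*P*(n:ℂ) + u^5*U^2*p*P*(n:ℂ)^2 + (-1 : ℂ)*u^6*U*p^2 + (-1 : ℂ)*u^7*p^2) * hnm + (U^6*P^2*(n:ℂ) + (-1 : ℂ)*U^6*P^2*(n:ℂ)*(n:ℂ)⁻¹ + (-9 : ℂ)*u^2*U^4*p*P*(n:ℂ) + (9 : ℂ)*u^2*U^4*p*P*(n:ℂ)*(n:ℂ)⁻¹ + (-6 : ℂ)*u^2*U^4*p*P*(n:ℂ)^2 + (6 : ℂ)*u^2*U^4*p*P*(n:ℂ)^2*(n:ℂ)⁻¹ + (-1 : ℂ)*u^2*U^4*p*P*(n:ℂ)^3 + u^2*U^4*p*P*(n:ℂ)^3*(n:ℂ)⁻¹ + (16 : ℂ)*u^3*U^3*p*P*(n:ℂ) + (-16 : ℂ)*u^3*U^3*p*P*(n:ℂ)*(n:ℂ)⁻¹ + (12 : ℂ)*u^3*U^3*p*P*(n:ℂ)^2 + (-12 : ℂ)*u^3*U^3*p*P*(n:ℂ)^2*(n:ℂ)⁻¹ + (2 : ℂ)*u^3*U^3*p*P*(n:ℂ)^3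 + (-2 : ℂ)*u^3*U^3*p*P*(n:ℂ)^3*(n:ℂ)⁻¹ + (-9 : ℂ)*u^4*U^2*p*P*(n:ℂ) + (9 : ℂ)*u^4*U^2*p*P*(n:ℂ)*(n:ℂ)⁻¹ + (-6 : ℂ)*u^4*U^2*p*P*(n:ℂ)^2 + (6 : ℂ)*u^4*U^2*p*P*(n:ℂ)^2*(n:ℂ)⁻¹ + (-1 : ℂ)*u^4*U^2*p*P*(n:ℂ)^3 + u^4*U^2*p*P*(n:ℂ)^3*(n:ℂ)⁻¹ + u^6*p^2*(n:ℂ) + (-1 : ℂ)*u^6*p^2*(n:ℂ)*(n:ℂ)⁻¹) * hcosth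
    have key3 : t3 n - (1 - 2 / (n:ℂ)) = ((U^4*P^2 + (-1 : ℂ)*U^6*P^2 + (-4 : ℂ)*u*U^3*p*P + (6 : ℂ)*u^2*U^2*p*P + (-3 : ℂ)*u^2*U^4*p*P + (-4 : ℂ)*u^3*U*p*P + (8 : ℂ)*u^3*U^3*p*P + u^4*p^2 + (-3 : ℂ)*u^4*U^2*p*P + (-1 : ℂ)*u^6*p^2)*(n:ℂ) + ((2 : ℂ)*U^6*P^2 + (-18 : ℂ)*u^2*U^4*p*P + (32 : ℂ)*u^3*U^3*p*P + (-18 : ℂ)*u^4*U^2*p*P + (2 : ℂ)*u^6*p^2)) / ((n:ℂ) * (((-1 : ℂ)*u^2*U^4*p*P + (2 : ℂ)*u^3*U^3*p*P + (-1 : ℂ)*u^4*U^2*p*P)*(n:ℂ)^2 + ((-6 : ℂ)*u^2*U^4*p*P + (12 : ℂ)*u^3*U^3*p*P + (-6 : ℂ)*u^4*U^2*p*P)*(n:ℂ) + (U^6*P^2 + (-9 : ℂ)*u^2*U^4*p*P + (16 : ℂ)*u^3*U^3*p*P + (-9 : ℂ)*u^4*U^2*p*P + u^6*p^2))) := by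
      rw [eq_div_iff (mul_ne_zero hn0 hD0)]
      linear_combination (n:ℂ) * hT3 + ((4 : ℂ)*u*U^3*p*P*(n:ℂ)^2 + u*U^3*p*P*(n:ℂ)^3 + (-8 : ℂ)*u^2*U^2*p*P*(n:ℂ)^2 + (-2 : ℂ)*u^2*U^2*p*P*(n:ℂ)^3 + (4 : ℂ)*u^3*U*p*P*(n:ℂ)^2 + u^3*U*p*P*(n:ℂ)^3) * huU + ((2 : ℂ)*U^6*P^2 + (-18 : ℂ)*u^2*U^4*p*P + (-12 : ℂ)*u^2*U^4*p*P*(n:ℂ) + (-2 : ℂ)*u^2*U^4*p*P*(n:ℂ)^2 + (32 : ℂ)*u^3*U^3*p*P + (24 : ℂ)*u^3*U^3*p*P*(n:ℂ) + (4 : ℂ)*u^3*U^3*p*P*(n:ℂ)^2 + (-18 : ℂ)*u^4*U^2*p*P + (-12 : ℂ)*u^4*U^2*p*P*(n:ℂ) + (-2 : ℂ)*u^4*U^2*p*P*(n:ℂ)^2 + (2 : ℂ)*u^6*p^2) * hnm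
    exact ⟨key3, key2, key1, key0⟩
  refine ⟨?_, ?_, ?_, ?_⟩
  · exact glue _ _ _ _ _ _ hd2ne _ (fun n hn hn0 hD0 => (main n hn hn0 hD0).1)
  · exact glue _ _ _ _ _ _ hd2ne _ (fun n hn hn0 hD0 => (main n hn hn0 hD0).2.1)
  · exact glue _ _ _ _ _ _ hd2ne _ (fun n hn hn0 hD0 => (main n hn hn0 hD0).2.2.1)
  · exact glue _ _ _ _ _ _ hd2ne _ (fun n hn hn0 hD0 => (main n hn hn0 hD0).2.2.2)
end

section
/- Let A, B, S, C, y ∈ ℂ[X] with y = c·∏_{j=1}^n (X − z_j) for some nonzero c ∈ ℂ and pairwise distinct z_1, …, z_n, and suppose the differential equation A·S·y'' + ((A' + B)·S − A·S')·y' + C·y = 0 holds identically in ℂ[X]. Then for every k = 1, …, n with A(z_k) ≠ 0 and S(z_k) ≠ 0: ∑_{j ≠ k} 1/(z_k − z_j) + (A'(z_k) + B(z_k))/(2·A(z_k)) − S'(z_k)/(2·S(z_k)) = 0. -/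
open Polynomial

lemma derivative_finset_prod' {R ι : Type*} [CommSemiring R] [DecidableEq ι]
    (s : Finset ι) (f : ι → Polynomial R) :
    derivative (∏ i ∈ s, f i) =
      ∑ i ∈ s, (∏ j ∈ s.erase i, f j) * derivative (f i) := by
  induction s using Finset.induction with
  | empty => simp
  | @insert a s ha ih =>
    rw [Finset.prod_insert ha, derivative_mul, ih, Finset.sum_insert ha,
      Finset.erase_insert ha, Finset.mul_sum]
    have hcong : ∀ i ∈ s, (∏ j ∈ (insert a s).erase i, f j) * derivative (f i)
        = f a * ((∏ j ∈ s.erase i, f j) * derivative (f i)) := by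
      intro i hi
      have hia : i ≠ a := by rintro rfl; exact ha hi
      rw [Finset.erase_insert_of_ne hia.symm,
        Finset.prod_insert (fun h => ha (Finset.mem_of_mem_erase h)), mul_assoc]
    rw [Finset.sum_congr rfl hcong, mul_comm (derivative (f a)), add_comm]

theorem electrostatic_model_from_ode (n : ℕ)
    (A B S Cv y : Polynomial ℂ) (c : ℂ) (hc : c ≠ 0)
    (z : Fin n → ℂ) (hzinj : Function.Injective z)
    (hy : y = Polynomial.C c * ∏ j, (Polynomial.X - Polynomial.C (z j)))
    (hode : A * S * Polynomial.derivative (Polynomial.derivative y) +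
      ((Polynomial.derivative A + B) * S - A * Polynomial.derivative S) *
        Polynomial.derivative y + Cv * y = 0) :
    ∀ k : Fin n, A.eval (z k) ≠ 0 → S.eval (z k) ≠ 0 →
      (∑ j ∈ Finset.univ.erase k, 1 / (z k - z j)) +
        ((Polynomial.derivative A).eval (z k) + B.eval (z k)) / (2 * A.eval (z k)) -
        (Polynomial.derivative S).eval (z k) / (2 * S.eval (z k)) = 0 := by
  intro k hA hS
  set P : Polynomial ℂ := ∏ j ∈ Finset.univ.erase k, (X - Polynomial.C (z j)) with hP
  have hyP : y = Polynomial.C c * ((X - Polynomial.C (z k)) * P) := by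
    rw [hy, ← Finset.mul_prod_erase _ _ (Finset.mem_univ k)]
  -- differences are nonzero
  have hzne : ∀ j ∈ Finset.univ.erase k, z k - z j ≠ 0 := by
    intro j hj h
    exact (Finset.ne_of_mem_erase hj) (hzinj (sub_eq_zero.mp h)).symm
  have hp0 : P.eval (z k) ≠ 0 := by
    rw [hP, eval_prod]
    apply Finset.prod_ne_zero_iff.mpr
    intro j hj
    simpa using hzne j hj
  -- derivative of P evaluated at z k
  have hdP : (derivative P).eval (z k) =
      P.eval (z k) * ∑ j ∈ Finset.univ.erase k, 1 / (z k - z j) := by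
    rw [hP, derivative_finset_prod', eval_finset_sum, Finset.mul_sum]
    apply Finset.sum_congr rfl
    intro j hj
    have h1 : (∏ i ∈ (Finset.univ.erase k).erase j, (X - Polynomial.C (z i))).eval (z k)
        * (z k - z j) = (∏ i ∈ Finset.univ.erase k, (X - Polynomial.C (z i))).eval (z k) := by
      rw [← Finset.mul_prod_erase _ _ hj, eval_mul]
      simp [mul_comm]
    have hz := hzne j hj
    simp only [derivative_sub, derivative_X, derivative_C, sub_zero, eval_mul, eval_one, mul_one]
    field_simp
    linear_combination h1
  -- first and second derivatives of y
  have hy1 : derivative y = Polynomial.C c * (P + (X - Polynomial.C (z k)) * derivative P) := by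
    rw [hyP]
    simp only [derivative_mul, derivative_C, derivative_sub, derivative_X, zero_mul, zero_add,
      sub_zero, one_mul]
  have hy2 : derivative (derivative y) =
      Polynomial.C c * (2 * derivative P + (X - Polynomial.C (z k)) * derivative (derivative P)) := by
    rw [hy1]
    simp only [derivative_mul, derivative_C, derivative_sub, derivative_X, derivative_add,
      zero_mul, zero_add, sub_zero, one_mul]
    ring
  -- evaluate the ODE at z k
  have hev := congrArg (eval (z k)) hode
  rw [hy2, hy1, hyP] at hev
  simp only [eval_add, eval_mul, eval_sub, eval_X, eval_C, eval_zero, eval_one, eval_ofNat,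
    sub_self, zero_mul, mul_zero, add_zero, zero_add] at hev
  rw [hdP] at hev
  have h2 : (2 : ℂ) ≠ 0 := two_ne_zero
  field_simp
  have hsum : (∑ j : Fin n, 1 / (z k - z j)) = ∑ j ∈ Finset.univ.erase k, 1 / (z k - z j) :=
    (Finset.sum_erase _ (by simp)).symm
  have hcp : c * P.eval (z k) ≠ 0 := mul_ne_zero hc hp0
  have hev2 := mul_left_cancel₀ hcp (show (c * P.eval (z k)) *
      (A.eval (z k) * S.eval (z k) * (2 * ∑ j ∈ Finset.univ.erase k, 1 / (z k - z j)) +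
        (((derivative A).eval (z k) + B.eval (z k)) * S.eval (z k) -
          A.eval (z k) * (derivative S).eval (z k))) = (c * P.eval (z k)) * 0 by
    linear_combination hev)
  linear_combination hev2
end
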